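/- Let v be even and 6 < x ≤ v/2 with x odd. The sequence v-2, v-4, ..., x+1, x-1, x-2, x-4, ..., 1, v-1, v-3, ..., x, 0, 2, 4, ..., x-3 is a Hamiltonian path in K_v on {0,...,v-1} realizing the multiset {1, 2^{v-3}, x}: all consecutive edge-lengths are 2 except the edge between x-1 and x-2 (length 1) and the edge between x and 0 (length x). -/

import Mathlib

def pathLen (v p q : ℕ) : ℕ := min (Nat.dist p q) (v - Nat.dist p q)

def lengths (v : ℕ) (h : List ℕ) : Multiset ℕ :=
  (List.zipWith (pathLen v) h h.tail : List ℕ)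

def IsHamPath (v : ℕ) (h : List ℕ) : Prop :=
  h.Nodup ∧ h.length = v ∧ ∀ p ∈ h, p < v

/-- The sequence v-2, v-4, ..., x+1, x-1, x-2, x-4, ..., 1, v-1, v-3, ..., x, 0, 2, 4, ..., x-3. -/
def pathEvenV (v x : ℕ) : List ℕ :=
  (List.range ((v - x - 1) / 2)).map (fun i => v - 2 - 2 * i) ++
  (x - 1) :: (List.range ((x - 1) / 2)).map (fun i => x - 2 - 2 * i) ++
  (List.range ((v - x + 1) / 2)).map (fun i => v - 1 - 2 * i) ++
  (List.range ((x - 1) / 2)).map (fun i => 2 * i)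

lemma lengths_cons (v a b : ℕ) (l : List ℕ) :
    lengths v (a :: b :: l) = pathLen v a b ::ₘ lengths v (b :: l) := rfl

lemma lengths_seg_aux (v : ℕ) (f : ℕ → ℕ) :
    ∀ (n : ℕ), 0 < n → ∀ (l : List ℕ),
    (∀ i, i + 1 < n → pathLen v (f i) (f (i + 1)) = 2) →
    lengths v ((List.range n).map f ++ l)
      = Multiset.replicate (n - 1) 2 + lengths v (f (n - 1) :: l) := by
  intro n
  induction n with
  | zero => omega
  | succ n ih =>
    intro _ l hf
    rcases Nat.eq_zero_or_pos n with rfl | hn'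
    · rw [show List.range 1 = [0] from rfl]; simp
    · rw [List.range_succ, List.map_append, List.append_assoc]
      simp only [List.map_cons, List.map_nil, List.cons_append, List.nil_append,
        Nat.add_sub_cancel]
      rw [ih hn' (f n :: l) (fun i hi => hf i (by omega))]
      have h1 : n - 1 + 1 = n := by omega
      have h2 := hf (n - 1) (by omega)
      rw [h1] at h2
      rw [lengths_cons, h2]
      have h3 : Multiset.replicate n 2 = 2 ::ₘ Multiset.replicate (n - 1) 2 := by
        rw [← Multiset.replicate_succ]; congr 1; omega
      rw [h3, Multiset.cons_add, Multiset.add_cons]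

lemma lengths_seg (v : ℕ) (f : ℕ → ℕ) (n : ℕ) (l : List ℕ) (a : ℕ) (hn : 0 < n)
    (ha : f (n - 1) = a)
    (hf : ∀ i, i + 1 < n → pathLen v (f i) (f (i + 1)) = 2) :
    lengths v ((List.range n).map f ++ l)
      = Multiset.replicate (n - 1) 2 + lengths v (a :: l) := by
  rw [lengths_seg_aux v f n hn l hf, ha]

lemma lengths_junction (v a c : ℕ) (f : ℕ → ℕ) (n : ℕ) (l : List ℕ) (hn : 0 < n)
    (hc : pathLen v a (f 0) = c) :
    lengths v (a :: ((List.range n).map f ++ l))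
      = c ::ₘ lengths v ((List.range n).map f ++ l) := by
  obtain ⟨n, rfl⟩ := Nat.exists_eq_succ_of_ne_zero hn.ne'
  rw [List.range_succ_eq_map]
  simp only [List.map_cons, List.cons_append]
  rw [lengths_cons, hc]

theorem stmt_10 (v x : ℕ) (hv : Even v) (hx : Odd x) (h6 : 6 < x) (hx2 : x ≤ v / 2) :
    IsHamPath v (pathEvenV v x) ∧
    lengths v (pathEvenV v x) = 1 ::ₘ x ::ₘ Multiset.replicate (v - 3) 2 := by
  obtain ⟨m, rfl⟩ := hv
  obtain ⟨k, rfl⟩ := hx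
  have hk : 3 ≤ k := by omega
  have hm : 2 * k + 1 ≤ m := by omega
  have e1 : (m + m - (2 * k + 1) - 1) / 2 = m - k - 1 := by omega
  have e2 : (2 * k + 1 - 1) / 2 = k := by omega
  have e3 : (m + m - (2 * k + 1) + 1) / 2 = m - k := by omega
  have hL : pathEvenV (m + m) (2 * k + 1) =
      (List.range (m - k - 1)).map (fun i => m + m - 2 - 2 * i) ++
      (2 * k :: ((List.range k).map (fun i => 2 * k + 1 - 2 - 2 * i) ++
      ((List.range (m - k)).map (fun i => m + m - 1 - 2 * i) ++
      (List.range k).map (fun i => 2 * i)))) := by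
    rw [pathEvenV, e1, e2, e3]
    simp only [List.append_assoc, List.cons_append, Nat.add_sub_cancel]
  rw [hL]
  constructor
  · refine ⟨?_, ?_, ?_⟩
    · -- Nodup
      have nodA : ((List.range (m - k - 1)).map (fun i => m + m - 2 - 2 * i)).Nodup :=
        (List.nodup_range).map_on (by
          intro a ha b hb hab
          rw [List.mem_range] at ha hb
          omega)
      have nodB : ((List.range k).map (fun i => 2 * k + 1 - 2 - 2 * i)).Nodup :=
        (List.nodup_range).map_on (by
          intro a ha b hb hab
          rw [List.mem_range] at ha hb
          omega)
      have nodC : ((List.range (m - k)).map (fun i => m + m - 1 - 2 * i)).Nodup :=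
        (List.nodup_range).map_on (by
          intro a ha b hb hab
          rw [List.mem_range] at ha hb
          omega)
      have nodD : ((List.range k).map (fun i => 2 * i)).Nodup :=
        (List.nodup_range).map_on (by
          intro a ha b hb hab
          rw [List.mem_range] at ha hb
          omega)
      refine List.Nodup.append nodA (List.nodup_cons.2 ⟨?_, List.Nodup.append nodB
        (List.Nodup.append nodC nodD ?_) ?_⟩) ?_
      · intro hmem
        simp only [List.mem_append, List.mem_map, List.mem_range] at hmem
        rcases hmem with ⟨i, hi, h⟩ | ⟨i, hi, h⟩ | ⟨i, hi, h⟩ <;> omega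
      · simp only [List.disjoint_left, List.mem_map, List.mem_range]
        rintro a ⟨i, hi, rfl⟩ ⟨j, hj, h⟩
        omega
      · simp only [List.disjoint_left, List.mem_map, List.mem_range, List.mem_append]
        rintro a ⟨i, hi, rfl⟩ (⟨j, hj, h⟩ | ⟨j, hj, h⟩)
        · omega
        · omega
      · simp only [List.disjoint_left, List.mem_map, List.mem_range, List.mem_cons,
          List.mem_append]
        rintro a ⟨i, hi, rfl⟩ (h | ⟨j, hj, h⟩ | ⟨j, hj, h⟩ | ⟨j, hj, h⟩) <;> omega
    · -- length
      simp only [List.length_append, List.length_map, List.length_range, List.length_cons]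
      omega
    · -- bounds
      intro p hp
      simp only [List.mem_append, List.mem_map, List.mem_range, List.mem_cons] at hp
      rcases hp with ⟨i, hi, rfl⟩ | rfl | ⟨i, hi, rfl⟩ | ⟨i, hi, rfl⟩ | ⟨i, hi, rfl⟩ <;> omega
  · -- lengths
    rw [lengths_seg (m + m) (fun i => m + m - 2 - 2 * i) (m - k - 1) _ (2 * k + 2)
      (by omega) (by show m + m - 2 - 2 * (m - k - 1 - 1) = 2 * k + 2; omega)
      (by intro i hi; simp only [pathLen, Nat.dist]; omega)]
    rw [lengths_cons]
    rw [show pathLen (m + m) (2 * k + 2) (2 * k) = 2 by simp only [pathLen, Nat.dist]; omega]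
    rw [lengths_junction (m + m) (2 * k) 1 (fun i => 2 * k + 1 - 2 - 2 * i) k _
      (by omega) (by show pathLen (m + m) (2 * k) (2 * k + 1 - 2 - 2 * 0) = 1
                     simp only [pathLen, Nat.dist]; omega)]
    rw [lengths_seg (m + m) (fun i => 2 * k + 1 - 2 - 2 * i) k _ 1
      (by omega) (by show 2 * k + 1 - 2 - 2 * (k - 1) = 1; omega)
      (by intro i hi; simp only [pathLen, Nat.dist]; omega)]
    rw [lengths_junction (m + m) 1 2 (fun i => m + m - 1 - 2 * i) (m - k) _
      (by omega) (by show pathLen (m + m) 1 (m + m - 1 - 2 * 0) = 2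
                     simp only [pathLen, Nat.dist]; omega)]
    rw [lengths_seg (m + m) (fun i => m + m - 1 - 2 * i) (m - k) _ (2 * k + 1)
      (by omega) (by show m + m - 1 - 2 * (m - k - 1) = 2 * k + 1; omega)
      (by intro i hi; simp only [pathLen, Nat.dist]; omega)]
    rw [show ((List.range k).map (fun i => 2 * i)) = ((List.range k).map (fun i => 2 * i)) ++ [] from (List.append_nil _).symm]
    rw [lengths_junction (m + m) (2 * k + 1) (2 * k + 1) (fun i => 2 * i) k []
      (by omega) (by show pathLen (m + m) (2 * k + 1) (2 * 0) = 2 * k + 1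
                     simp only [pathLen, Nat.dist]; omega)]
    rw [lengths_seg (m + m) (fun i => 2 * i) k [] (2 * (k - 1))
      (by omega) rfl (by intro i hi; simp only [pathLen, Nat.dist]; omega)]
    rw [show lengths (m + m) [2 * (k - 1)] = 0 from rfl]
    ext a
    simp only [Multiset.count_add, Multiset.count_cons, Multiset.count_replicate,
      Multiset.count_zero, add_zero]
    split_ifs <;> omega
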